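/- Let n ≥ 1 be an integer, α ∈ (0,1), β > n/2 reals, t > 0 and C > 0. Let K : ℝⁿ → ℂ be measurable and suppose |K(x)| ≤ C·t^{α−1−αn/β} for almost every x with |x| ≤ t^{α/β}, and |K(x)| ≤ C·t^{2α−1}·|x|^{−n−β} for almost every x with |x| ≥ t^{α/β}. Then for every s ∈ [1,∞] there is a constant C′ depending only on n, α, β, s such that ‖K‖_{L^s(ℝⁿ)} ≤ C·C′·t^{α−1−(αn/β)(1−1/s)}. -/

import Mathlib

open MeasureTheory Set ENNReal

lemma myaux_J_lt_top (n : ℕ) {r : ℝ} (hr : (n : ℝ) < r) :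
    ∫⁻ x in {x : EuclideanSpace ℝ (Fin n) | 1 ≤ ‖x‖}, ENNReal.ofReal (‖x‖ ^ (-r)) ∂volume < ∞ := by
  have hr0 : 0 < r := lt_of_le_of_lt (Nat.cast_nonneg n) hr
  have hmeas : MeasurableSet {x : EuclideanSpace ℝ (Fin n) | 1 ≤ ‖x‖} :=
    (isClosed_le continuous_const continuous_norm).measurableSet
  have key : ∀ x : EuclideanSpace ℝ (Fin n), x ∈ {x : EuclideanSpace ℝ (Fin n) | 1 ≤ ‖x‖} →
      ENNReal.ofReal (‖x‖ ^ (-r)) ≤ ENNReal.ofReal ((2:ℝ) ^ r * (1 + ‖x‖) ^ (-r)) := by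
    intro x hx
    apply ENNReal.ofReal_le_ofReal
    have hx1 : (1:ℝ) ≤ ‖x‖ := hx
    have hx0 : (0:ℝ) < ‖x‖ := lt_of_lt_of_le one_pos hx1
    have h2 : (1 + ‖x‖) ≤ 2 * ‖x‖ := by linarith
    have h3 := Real.rpow_le_rpow_of_nonpos (by positivity) h2 (neg_nonpos.mpr hr0.le)
    rw [Real.mul_rpow (by norm_num) hx0.le] at h3
    calc ‖x‖ ^ (-r) = (2:ℝ) ^ r * ((2:ℝ) ^ (-r) * ‖x‖ ^ (-r)) := by
          rw [← mul_assoc, ← Real.rpow_add (by norm_num), add_neg_cancel, Real.rpow_zero, one_mul]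
      _ ≤ (2:ℝ) ^ r * (1 + ‖x‖) ^ (-r) :=
          mul_le_mul_of_nonneg_left h3 (by positivity)
  have hfr : ((Module.finrank ℝ (EuclideanSpace ℝ (Fin n)) : ℝ)) < r := by
    rw [finrank_euclideanSpace_fin]; exact hr
  calc ∫⁻ x in {x : EuclideanSpace ℝ (Fin n) | 1 ≤ ‖x‖}, ENNReal.ofReal (‖x‖ ^ (-r)) ∂volume
      ≤ ∫⁻ x in {x : EuclideanSpace ℝ (Fin n) | 1 ≤ ‖x‖},
          ENNReal.ofReal ((2:ℝ) ^ r * (1 + ‖x‖) ^ (-r)) ∂volume := setLIntegral_mono' hmeas key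
    _ ≤ ∫⁻ x : EuclideanSpace ℝ (Fin n), ENNReal.ofReal ((2:ℝ) ^ r * (1 + ‖x‖) ^ (-r)) ∂volume :=
        setLIntegral_le_lintegral _ _
    _ = ENNReal.ofReal ((2:ℝ) ^ r) *
        ∫⁻ x : EuclideanSpace ℝ (Fin n), ENNReal.ofReal ((1 + ‖x‖) ^ (-r)) ∂volume := by
        simp_rw [ENNReal.ofReal_mul (by positivity : (0:ℝ) ≤ (2:ℝ) ^ r)]
        rw [lintegral_const_mul' _ _ ENNReal.ofReal_ne_top]
    _ < ∞ := ENNReal.mul_lt_top ENNReal.ofReal_lt_top (finite_integral_one_add_norm hfr)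

lemma myaux_scaling (n : ℕ) (r R : ℝ) (hR : 0 < R) :
    ∫⁻ x in {x : EuclideanSpace ℝ (Fin n) | R ≤ ‖x‖}, ENNReal.ofReal (‖x‖ ^ (-r)) ∂volume
      = ENNReal.ofReal (R ^ ((n:ℝ) - r)) *
        ∫⁻ x in {x : EuclideanSpace ℝ (Fin n) | 1 ≤ ‖x‖}, ENNReal.ofReal (‖x‖ ^ (-r)) ∂volume := by
  set E := EuclideanSpace ℝ (Fin n)
  have hmeasR : MeasurableSet {x : E | R ≤ ‖x‖} :=
    (isClosed_le continuous_const continuous_norm).measurableSet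
  have hmeas1 : MeasurableSet {x : E | 1 ≤ ‖x‖} :=
    (isClosed_le continuous_const continuous_norm).measurableSet
  set f : E → ℝ≥0∞ := {x : E | R ≤ ‖x‖}.indicator (fun x => ENNReal.ofReal (‖x‖ ^ (-r)))
  have hf_meas : Measurable f := by
    apply Measurable.indicator _ hmeasR
    fun_prop
  have hsmul : Measurable (fun y : E => R • y) := (continuous_const_smul R).measurable
  have hcomp : ∀ y : E, f (R • y) =
      ENNReal.ofReal (R ^ (-r)) *
        ({x : E | 1 ≤ ‖x‖}.indicator (fun x => ENNReal.ofReal (‖x‖ ^ (-r))) y) := by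
    intro y
    have hnorm : ‖R • y‖ = R * ‖y‖ := by
      rw [norm_smul, Real.norm_eq_abs, abs_of_pos hR]
    have hmem : R • y ∈ {x : E | R ≤ ‖x‖} ↔ y ∈ {x : E | 1 ≤ ‖x‖} := by
      simp only [mem_setOf_eq, hnorm]
      exact le_mul_iff_one_le_right hR
    by_cases hy : y ∈ {x : E | 1 ≤ ‖x‖}
    · simp only [f]; rw [indicator_of_mem (hmem.mpr hy), indicator_of_mem hy, hnorm,
        Real.mul_rpow hR.le (norm_nonneg _), ENNReal.ofReal_mul (by positivity)]
    · simp only [f]; rw [indicator_of_notMem (fun h => hy (hmem.mp h)), indicator_of_notMem hy, mul_zero]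
  have hmap := Measure.map_addHaar_smul (volume : Measure E) (r := R) hR.ne'
  have hchange : ∫⁻ y : E, f (R • y) ∂volume
      = ENNReal.ofReal |(R ^ Module.finrank ℝ E)⁻¹| * ∫⁻ x : E, f x ∂volume := by
    rw [← lintegral_map hf_meas hsmul, hmap, lintegral_smul_measure, smul_eq_mul]
  have hRnE : (R : ℝ) ^ Module.finrank ℝ E = R ^ ((n:ℝ)) := by
    rw [finrank_euclideanSpace_fin, ← Real.rpow_natCast]
  have hpos : (0:ℝ) < R ^ ((n:ℝ)) := Real.rpow_pos_of_pos hR _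
  have hmain : ∫⁻ x : E, f x ∂volume
      = ENNReal.ofReal (R ^ ((n:ℝ))) * ∫⁻ y : E, f (R • y) ∂volume := by
    rw [hchange, ← mul_assoc, hRnE, abs_inv, abs_of_pos hpos, ← ENNReal.ofReal_mul hpos.le,
      mul_inv_cancel₀ hpos.ne', ENNReal.ofReal_one, one_mul]
  rw [← lintegral_indicator hmeasR, hmain]
  simp_rw [hcomp]
  rw [lintegral_const_mul' _ _ ENNReal.ofReal_ne_top, lintegral_indicator hmeas1, ← mul_assoc,
    ← ENNReal.ofReal_mul hpos.le, ← Real.rpow_add hR, ← sub_eq_add_neg]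

/-- Lemma 3.2(2a): if `β > n/2` and `K` obeys the pointwise bounds of Lemma 3.1(2)
(with constant `C` and time `t`), then for every `s ∈ [1,∞]` (as an extended real),
`‖K‖_{L^s} ≤ C C' t^{α-1-(αn/β)(1-1/s)}` with `C'` depending only on `n, α, β, s`. -/
theorem Ls_estimate_P_beta_gt_half_n
    (n : ℕ) (hn : 1 ≤ n) (α β : ℝ) (hα0 : 0 < α) (hα1 : α < 1) (hβ : (n : ℝ) / 2 < β)
    (s : ℝ≥0∞) (hs : 1 ≤ s) :
    ∃ C' : ℝ, 0 < C' ∧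
      ∀ (t C : ℝ), 0 < t → 0 < C →
        ∀ K : EuclideanSpace ℝ (Fin n) → ℂ, Measurable K →
          (∀ᵐ x : EuclideanSpace ℝ (Fin n) ∂volume,
            ‖x‖ ≤ t ^ (α / β) → ‖K x‖ ≤ C * t ^ (α - 1 - α * n / β)) →
          (∀ᵐ x : EuclideanSpace ℝ (Fin n) ∂volume,
            t ^ (α / β) ≤ ‖x‖ → ‖K x‖ ≤ C * t ^ (2 * α - 1) * ‖x‖ ^ (-(n : ℝ) - β)) →
          eLpNorm K s volume
            ≤ ENNReal.ofReal
                (C * C' * t ^ (α - 1 - (α * n / β) * (1 - (1 / s).toReal))) := by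
  have hn0 : (0:ℝ) < (n:ℝ) := by exact_mod_cast hn
  have hβ0 : (0:ℝ) < β := lt_trans (by positivity) hβ
  have hβn : (n:ℝ) < (n:ℝ) + β := by linarith
  by_cases hstop : s = ∞
  · -- case s = ∞
    refine ⟨1, one_pos, fun t C ht hC K hK h1 h2 => ?_⟩
    subst hstop
    have hRpos : (0:ℝ) < t ^ (α / β) := Real.rpow_pos_of_pos ht _
    have hbd : ∀ᵐ x : EuclideanSpace ℝ (Fin n) ∂volume,
        ‖K x‖ ≤ C * t ^ (α - 1 - α * n / β) := by
      filter_upwards [h1, h2] with x hx1 hx2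
      rcases le_total ‖x‖ (t ^ (α / β)) with hle | hge
      · exact hx1 hle
      · refine (hx2 hge).trans ?_
        have h3 : ‖x‖ ^ (-(n:ℝ) - β) ≤ (t ^ (α / β)) ^ (-(n:ℝ) - β) :=
          Real.rpow_le_rpow_of_nonpos hRpos hge (by linarith)
        have h4 : C * t ^ (2 * α - 1) * (t ^ (α / β)) ^ (-(n:ℝ) - β)
            = C * t ^ (α - 1 - α * n / β) := by
          rw [← Real.rpow_mul ht.le, mul_assoc, ← Real.rpow_add ht]
          congr 2
          field_simp
          ring
        calc C * t ^ (2 * α - 1) * ‖x‖ ^ (-(n:ℝ) - β)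
            ≤ C * t ^ (2 * α - 1) * (t ^ (α / β)) ^ (-(n:ℝ) - β) := by
              apply mul_le_mul_of_nonneg_left h3 (by positivity)
          _ = C * t ^ (α - 1 - α * n / β) := h4
    have := eLpNorm_le_of_ae_bound (p := (∞ : ℝ≥0∞)) (μ := (volume : Measure (EuclideanSpace ℝ (Fin n)))) hbd
    simp only [ENNReal.toReal_top, _root_.inv_zero, ENNReal.rpow_zero, one_mul] at this
    refine this.trans_eq ?_
    congr 1
    norm_num
  · -- case s finite
    have hs0 : s ≠ 0 := (zero_lt_one.trans_le hs).ne'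
    set p : ℝ := s.toReal with hp_def
    have hp1 : 1 ≤ p := by
      rw [← ENNReal.toReal_one]
      exact ENNReal.toReal_mono hstop hs
    have hp0 : (0:ℝ) < p := lt_of_lt_of_le one_pos hp1
    set r : ℝ := ((n:ℝ) + β) * p with hr_def
    have hrn : (n:ℝ) < r := by
      calc (n:ℝ) < (n:ℝ) + β := hβn
        _ = ((n:ℝ) + β) * 1 := (mul_one _).symm
        _ ≤ ((n:ℝ) + β) * p := by
            apply mul_le_mul_of_nonneg_left hp1 (by positivity)
    set J : ℝ≥0∞ := ∫⁻ x in {x : EuclideanSpace ℝ (Fin n) | 1 ≤ ‖x‖},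
        ENNReal.ofReal (‖x‖ ^ (-r)) ∂volume with hJ_def
    have hJfin : J < ∞ := myaux_J_lt_top n hrn
    set V : ℝ≥0∞ := volume (Metric.ball (0 : EuclideanSpace ℝ (Fin n)) 1) with hV_def
    have hVfin : V < ∞ := measure_ball_lt_top
    have hVpos : 0 < V := Metric.measure_ball_pos volume 0 one_pos
    set Vr : ℝ := V.toReal with hVr_def
    set Jr : ℝ := J.toReal with hJr_def
    have hVrpos : 0 < Vr := ENNReal.toReal_pos hVpos.ne' hVfin.ne
    have hJrnn : 0 ≤ Jr := ENNReal.toReal_nonneg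
    refine ⟨(Vr + Jr) ^ p⁻¹, Real.rpow_pos_of_pos (by linarith) _, fun t C ht hC K hK h1 h2 => ?_⟩
    set R : ℝ := t ^ (α / β) with hR_def
    have hRpos : (0:ℝ) < R := Real.rpow_pos_of_pos ht _
    set A : ℝ := α - 1 - α * n / β with hA_def
    set B2 : ℝ := 2 * α - 1 with hB2_def
    have hs_inv : (1 / s).toReal = p⁻¹ := by rw [one_div, ENNReal.toReal_inv]
    rw [hs_inv]
    set e : ℝ := α - 1 - α * ↑n / β * (1 - p⁻¹) with he_def
    set S : Set (EuclideanSpace ℝ (Fin n)) := {x | ‖x‖ ≤ R} with hS_def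
    have hSmeas : MeasurableSet S := (isClosed_le continuous_norm continuous_const).measurableSet
    have hvolS : volume S = ENNReal.ofReal (R ^ ((n:ℝ))) * V := by
      have hSeq : S = Metric.closedBall (0 : EuclideanSpace ℝ (Fin n)) R := by
        ext x; simp [hS_def, mem_closedBall_zero_iff]
      rw [hSeq, Measure.addHaar_closedBall _ _ hRpos.le, finrank_euclideanSpace_fin,
        ← Real.rpow_natCast R n]
    -- ball piece
    have hball : ∫⁻ x in S, (‖K x‖₊ : ℝ≥0∞) ^ p ∂volume
        ≤ ENNReal.ofReal ((C * t ^ A) ^ p) * (ENNReal.ofReal (R ^ ((n:ℝ))) * V) := by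
      calc ∫⁻ x in S, (‖K x‖₊ : ℝ≥0∞) ^ p ∂volume
          ≤ ∫⁻ _x in S, ENNReal.ofReal ((C * t ^ A) ^ p) ∂volume := by
            apply lintegral_mono_ae
            filter_upwards [ae_restrict_of_ae h1, ae_restrict_mem hSmeas] with x hx hxS
            have hb := hx hxS
            calc (‖K x‖₊ : ℝ≥0∞) ^ p = (ENNReal.ofReal ‖K x‖) ^ p := by
                  rw [ofReal_norm, enorm_eq_nnnorm]
              _ ≤ (ENNReal.ofReal (C * t ^ A)) ^ p :=
                  ENNReal.rpow_le_rpow (ENNReal.ofReal_le_ofReal hb) hp0.le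
              _ = ENNReal.ofReal ((C * t ^ A) ^ p) :=
                  ENNReal.ofReal_rpow_of_nonneg (by positivity) hp0.le
        _ = ENNReal.ofReal ((C * t ^ A) ^ p) * volume S := setLIntegral_const _ _
        _ = _ := by rw [hvolS]
    -- complement piece
    have hsub : Sᶜ ⊆ {x : EuclideanSpace ℝ (Fin n) | R ≤ ‖x‖} := by
      intro x hx
      simp only [hS_def, mem_compl_iff, mem_setOf_eq, not_le] at hx
      exact hx.le
    have hcompl : ∫⁻ x in Sᶜ, (‖K x‖₊ : ℝ≥0∞) ^ p ∂volume
        ≤ ENNReal.ofReal ((C * t ^ B2) ^ p) * (ENNReal.ofReal (R ^ ((n:ℝ) - r)) * J) := by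
      have step1 : ∫⁻ x in Sᶜ, (‖K x‖₊ : ℝ≥0∞) ^ p ∂volume
          ≤ ∫⁻ x in Sᶜ, ENNReal.ofReal ((C * t ^ B2) ^ p) * ENNReal.ofReal (‖x‖ ^ (-r)) ∂volume := by
        apply lintegral_mono_ae
        filter_upwards [ae_restrict_of_ae h2, ae_restrict_mem hSmeas.compl] with x hx hxS
        have hxR : R ≤ ‖x‖ := hsub hxS
        have hb := hx hxR
        have hx0 : (0:ℝ) < ‖x‖ := lt_of_lt_of_le hRpos hxR
        have hrw : (‖x‖ ^ (-(n:ℝ) - β)) ^ p = ‖x‖ ^ (-r) := by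
          rw [← Real.rpow_mul hx0.le]
          congr 1
          rw [hr_def]
          ring
        calc (‖K x‖₊ : ℝ≥0∞) ^ p = (ENNReal.ofReal ‖K x‖) ^ p := by
              rw [ofReal_norm, enorm_eq_nnnorm]
          _ ≤ (ENNReal.ofReal (C * t ^ B2 * ‖x‖ ^ (-(n:ℝ) - β))) ^ p :=
              ENNReal.rpow_le_rpow (ENNReal.ofReal_le_ofReal hb) hp0.le
          _ = ENNReal.ofReal ((C * t ^ B2) ^ p) * ENNReal.ofReal (‖x‖ ^ (-r)) := by
              rw [ENNReal.ofReal_rpow_of_nonneg (by positivity) hp0.le,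
                Real.mul_rpow (by positivity) (by positivity), hrw,
                ENNReal.ofReal_mul (by positivity)]
      refine step1.trans ?_
      rw [lintegral_const_mul' _ _ ENNReal.ofReal_ne_top]
      refine mul_le_mul' le_rfl ?_
      calc ∫⁻ x in Sᶜ, ENNReal.ofReal (‖x‖ ^ (-r)) ∂volume
          ≤ ∫⁻ x in {x : EuclideanSpace ℝ (Fin n) | R ≤ ‖x‖},
              ENNReal.ofReal (‖x‖ ^ (-r)) ∂volume := lintegral_mono_set hsub
        _ = ENNReal.ofReal (R ^ ((n:ℝ) - r)) * J := myaux_scaling n r R hRpos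
    -- exponent identities
    have hid1 : (C * t ^ A) ^ p * R ^ ((n:ℝ)) = (C * t ^ e) ^ p := by
      rw [Real.mul_rpow hC.le (by positivity), Real.mul_rpow hC.le (by positivity),
        ← Real.rpow_mul ht.le, hR_def, ← Real.rpow_mul ht.le, mul_assoc,
        ← Real.rpow_add ht, ← Real.rpow_mul ht.le]
      congr 2
      rw [hA_def, he_def]
      field_simp
      ring
    have hid2 : (C * t ^ B2) ^ p * R ^ ((n:ℝ) - r) = (C * t ^ e) ^ p := by
      rw [Real.mul_rpow hC.le (by positivity), Real.mul_rpow hC.le (by positivity),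
        ← Real.rpow_mul ht.le, hR_def, ← Real.rpow_mul ht.le, mul_assoc,
        ← Real.rpow_add ht, ← Real.rpow_mul ht.le]
      congr 2
      rw [hB2_def, he_def, hr_def]
      field_simp
      ring
    -- combine
    have hI : ∫⁻ x, (‖K x‖₊ : ℝ≥0∞) ^ p ∂volume
        ≤ ENNReal.ofReal ((C * t ^ e) ^ p * (Vr + Jr)) := by
      rw [← lintegral_add_compl (fun x => (‖K x‖₊ : ℝ≥0∞) ^ p) hSmeas]
      have hVeq : V = ENNReal.ofReal Vr := (ENNReal.ofReal_toReal hVfin.ne).symm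
      have hJeq : J = ENNReal.ofReal Jr := (ENNReal.ofReal_toReal hJfin.ne).symm
      calc ∫⁻ x in S, (‖K x‖₊ : ℝ≥0∞) ^ p ∂volume + ∫⁻ x in Sᶜ, (‖K x‖₊ : ℝ≥0∞) ^ p ∂volume
          ≤ ENNReal.ofReal ((C * t ^ A) ^ p) * (ENNReal.ofReal (R ^ ((n:ℝ))) * V)
            + ENNReal.ofReal ((C * t ^ B2) ^ p) * (ENNReal.ofReal (R ^ ((n:ℝ) - r)) * J) :=
            add_le_add hball hcompl
        _ = ENNReal.ofReal ((C * t ^ e) ^ p * Vr) + ENNReal.ofReal ((C * t ^ e) ^ p * Jr) := by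
            rw [hVeq, hJeq, ← ENNReal.ofReal_mul (by positivity), ← ENNReal.ofReal_mul (by positivity),
              ← ENNReal.ofReal_mul (by positivity), ← ENNReal.ofReal_mul (by positivity),
              ← mul_assoc, ← mul_assoc, hid1, hid2]
        _ = ENNReal.ofReal ((C * t ^ e) ^ p * (Vr + Jr)) := by
            rw [← ENNReal.ofReal_add (by positivity) (by positivity), ← mul_add]
    -- conclude
    rw [eLpNorm_eq_lintegral_rpow_enorm_toReal hs0 hstop, ← hp_def]
    calc (∫⁻ x, (‖K x‖₊ : ℝ≥0∞) ^ p ∂volume) ^ (1 / p)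
        ≤ (ENNReal.ofReal ((C * t ^ e) ^ p * (Vr + Jr))) ^ (1 / p) :=
          ENNReal.rpow_le_rpow hI (by positivity)
      _ = ENNReal.ofReal (((C * t ^ e) ^ p * (Vr + Jr)) ^ (1 / p)) :=
          ENNReal.ofReal_rpow_of_nonneg (by positivity) (by positivity)
      _ = ENNReal.ofReal (C * (Vr + Jr) ^ p⁻¹ * t ^ e) := by
          congr 1
          rw [Real.mul_rpow (by positivity) (by positivity), ← Real.rpow_mul (by positivity),
            mul_one_div_cancel hp0.ne', Real.rpow_one, one_div]
          ring
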